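/- Let 0 < s < 1 and t ≥ 0. Then the family of numbers L^s_n(t), n ∈ ℤ, is summable and Σ_{n∈ℤ} L^s_n(t) = 1. -/

import Mathlib

/-- The kernel `L^s_n(t)` of the semigroup generated by minus the discrete fractional
Laplacian on `ℤ` with mesh size `h = 1`. -/
noncomputable def Lker (s : ℝ) (n : ℤ) (t : ℝ) : ℝ :=
  (1 / (2 * Real.pi)) *
    ∫ θ in (-Real.pi)..Real.pi, Real.exp (-t * (4 * Real.sin (θ / 2) ^ 2) ^ s) * Real.cos (n * θ)

open MeasureTheory Real Set
open scoped NNReal ENNReal Nat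

noncomputable section

namespace LkerAux

/-- The `n`-th cosine Fourier coefficient of `f` on `[-π, π]`. -/
def coeff (f : ℝ → ℝ) (n : ℤ) : ℝ :=
  (1 / (2 * Real.pi)) * ∫ θ in (-Real.pi)..Real.pi, f θ * Real.cos (n * θ)

/-- `a` is an (absolutely summable) cosine-series representation of `f`. -/
def IsRep (f : ℝ → ℝ) (a : ℤ → ℝ) : Prop :=
  Summable a ∧ ∀ θ : ℝ, HasSum (fun n : ℤ => a n * Real.cos (n * θ)) (f θ)

theorem _root_.HasSum.congrFun {α ι : Type*} [AddCommMonoid α] [TopologicalSpace α]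
    {f g : ι → α} {x : α} (h : HasSum f x) (hfg : ∀ i, f i = g i) : HasSum g x :=
  (funext hfg : f = g) ▸ h

theorem isRep_congr {f g : ℝ → ℝ} {a : ℤ → ℝ} (h : ∀ θ, f θ = g θ) (hf : IsRep f a) :
    IsRep g a := ⟨hf.1, fun θ => h θ ▸ hf.2 θ⟩

theorem hasSum_at_zero {f : ℝ → ℝ} {a : ℤ → ℝ} (hf : IsRep f a) : HasSum a (f 0) := by
  have := hf.2 0
  simpa using this

theorem cos_mul_cos' (x y : ℝ) :
    Real.cos x * Real.cos y = (Real.cos (x + y) + Real.cos (x - y)) / 2 := by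
  rw [Real.cos_add, Real.cos_sub]; ring

theorem integral_cos_int (k : ℤ) :
    (∫ θ in (-Real.pi)..Real.pi, Real.cos (k * θ)) = if k = 0 then 2 * Real.pi else 0 := by
  rcases eq_or_ne k 0 with hk | hk
  · subst hk; simp [two_mul]
  · have hk' : (k : ℝ) ≠ 0 := Int.cast_ne_zero.mpr hk
    rw [if_neg hk, intervalIntegral.integral_comp_mul_left Real.cos hk', integral_cos]
    have h1 : Real.sin ((k : ℝ) * Real.pi) = 0 := Real.sin_int_mul_pi k
    have h2 : Real.sin ((k : ℝ) * -Real.pi) = 0 := by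
      rw [mul_neg, Real.sin_neg, h1, neg_zero]
    rw [h1, h2, sub_zero, smul_zero]

theorem integral_cos_mul_cos (m n : ℤ) :
    (∫ θ in (-Real.pi)..Real.pi, Real.cos (m * θ) * Real.cos (n * θ)) =
      (if m = n then Real.pi else 0) + (if m = -n then Real.pi else 0) := by
  have h : ∀ θ : ℝ, Real.cos (m * θ) * Real.cos (n * θ) =
      Real.cos (((m + n : ℤ) : ℝ) * θ) / 2 + Real.cos (((m - n : ℤ) : ℝ) * θ) / 2 := by
    intro θ
    rw [cos_mul_cos' ((m : ℝ) * θ) ((n : ℝ) * θ)]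
    push_cast
    ring_nf
  rw [intervalIntegral.integral_congr (g := fun θ =>
      Real.cos (((m + n : ℤ) : ℝ) * θ) / 2 + Real.cos (((m - n : ℤ) : ℝ) * θ) / 2)
      (fun θ _ => h θ)]
  have c1 : Continuous fun θ : ℝ => Real.cos (((m + n : ℤ) : ℝ) * θ) / 2 :=
    ((Real.continuous_cos.comp (continuous_const.mul continuous_id)).div_const 2)
  have c2 : Continuous fun θ : ℝ => Real.cos (((m - n : ℤ) : ℝ) * θ) / 2 :=
    ((Real.continuous_cos.comp (continuous_const.mul continuous_id)).div_const 2)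
  have i1 : IntervalIntegrable (fun θ : ℝ => Real.cos (((m + n : ℤ) : ℝ) * θ) / 2) volume
      (-Real.pi) Real.pi := c1.intervalIntegrable _ _
  have i2 : IntervalIntegrable (fun θ : ℝ => Real.cos (((m - n : ℤ) : ℝ) * θ) / 2) volume
      (-Real.pi) Real.pi := c2.intervalIntegrable _ _
  rw [intervalIntegral.integral_add i1 i2, intervalIntegral.integral_div,
    intervalIntegral.integral_div, integral_cos_int, integral_cos_int]
  simp only [add_eq_zero_iff_eq_neg, sub_eq_zero]
  split_ifs <;> ring

theorem coeff_of_rep {f : ℝ → ℝ} {a : ℤ → ℝ} (hf : IsRep f a) (n : ℤ) :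
    coeff f n = (a n + a (-n)) / 2 := by
  have hπ : (0 : ℝ) < Real.pi := Real.pi_pos
  have hle : -Real.pi ≤ Real.pi := by linarith
  -- rewrite the interval integral as a set integral
  have hmeas : ∀ m : ℤ, AEStronglyMeasurable
      (fun θ : ℝ => a m * Real.cos (m * θ) * Real.cos (n * θ))
      (volume.restrict (Ioc (-Real.pi) Real.pi)) := by
    intro m; exact (Continuous.aestronglyMeasurable (by fun_prop))
  have hbound : (∑' m : ℤ, ∫⁻ θ in Ioc (-Real.pi) Real.pi,
      ‖a m * Real.cos (m * θ) * Real.cos (n * θ)‖₊ ∂volume) ≠ ⊤ := by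
    have hb : ∀ m : ℤ, (∫⁻ θ in Ioc (-Real.pi) Real.pi,
        ‖a m * Real.cos (m * θ) * Real.cos (n * θ)‖₊ ∂volume)
        ≤ (‖a m‖₊ : ℝ≥0∞) * ENNReal.ofReal (2 * Real.pi) := by
      intro m
      have : ∀ θ : ℝ, (‖a m * Real.cos (m * θ) * Real.cos (n * θ)‖₊ : ℝ≥0∞) ≤ ‖a m‖₊ := by
        intro θ
        refine ENNReal.coe_le_coe.mpr ?_
        have : ‖a m * Real.cos (m * θ) * Real.cos (n * θ)‖ ≤ ‖a m‖ := by
          rw [norm_mul, norm_mul]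
          calc ‖a m‖ * ‖Real.cos (m * θ)‖ * ‖Real.cos (n * θ)‖
              ≤ ‖a m‖ * 1 * 1 := by
                gcongr <;> simp [Real.abs_cos_le_one]
            _ = ‖a m‖ := by ring
        exact_mod_cast this
      calc (∫⁻ θ in Ioc (-Real.pi) Real.pi, ‖a m * Real.cos (m * θ) * Real.cos (n * θ)‖₊ ∂volume)
          ≤ ∫⁻ _ in Ioc (-Real.pi) Real.pi, (‖a m‖₊ : ℝ≥0∞) ∂volume :=
            lintegral_mono fun θ => this θ
        _ = (‖a m‖₊ : ℝ≥0∞) * volume (Ioc (-Real.pi) Real.pi) := by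
            rw [setLIntegral_const]
        _ = (‖a m‖₊ : ℝ≥0∞) * ENNReal.ofReal (2 * Real.pi) := by
            rw [Real.volume_Ioc]; ring_nf
    refine ne_top_of_le_ne_top ?_ (ENNReal.tsum_le_tsum hb)
    rw [ENNReal.tsum_mul_right]
    refine ENNReal.mul_ne_top ?_ ENNReal.ofReal_ne_top
    exact ENNReal.tsum_coe_ne_top_iff_summable.mpr (by
      have : Summable fun m : ℤ => ‖a m‖ := hf.1.abs.congr (fun m => (Real.norm_eq_abs _).symm)
      exact NNReal.summable_coe.mp (this.congr fun m => rfl))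
  have key : (∫ θ in Ioc (-Real.pi) Real.pi, f θ * Real.cos (n * θ)) =
      ∑' m : ℤ, ∫ θ in Ioc (-Real.pi) Real.pi, a m * Real.cos (m * θ) * Real.cos (n * θ) := by
    rw [← MeasureTheory.integral_tsum hmeas hbound]
    refine setIntegral_congr_fun measurableSet_Ioc fun θ _ => ?_
    have := ((hf.2 θ).mul_right (Real.cos (n * θ))).tsum_eq
    exact this.symm
  have hval : ∀ m : ℤ, (∫ θ in Ioc (-Real.pi) Real.pi,
      a m * Real.cos (m * θ) * Real.cos (n * θ)) =
      (if m = n then a n * Real.pi else 0) + (if m = -n then a (-n) * Real.pi else 0) := by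
    intro m
    have : (∫ θ in Ioc (-Real.pi) Real.pi, a m * Real.cos (m * θ) * Real.cos (n * θ)) =
        a m * ∫ θ in (-Real.pi)..Real.pi, Real.cos (m * θ) * Real.cos (n * θ) := by
      rw [intervalIntegral.integral_of_le hle, ← integral_const_mul]
      congr 1; ext θ; ring
    rw [this, integral_cos_mul_cos]
    split_ifs with h1 h2 h3
    · rw [show a n = a m by rw [h1], show a (-n) = a m by rw [← h2]]; ring
    · rw [show a n = a m by rw [h1]]; ring
    · rw [show a (-n) = a m by rw [← h3]]; ring
    · ring
  rw [coeff, intervalIntegral.integral_of_le hle, key, tsum_congr hval, Summable.tsum_add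
      ((hasSum_ite_eq n _).summable) ((hasSum_ite_eq (-n) _).summable),
    tsum_ite_eq, tsum_ite_eq]
  field_simp

theorem isRep_symm {f : ℝ → ℝ} {a : ℤ → ℝ} (hf : IsRep f a) :
    IsRep f (fun n => (a n + a (-n)) / 2) := by
  have hneg : Summable fun n : ℤ => a (-n) := (Equiv.neg ℤ).summable_iff.mpr hf.1
  constructor
  · exact (hf.1.add hneg).div_const 2
  · intro θ
    have h1 := hf.2 θ
    have h2 : HasSum (fun n : ℤ => a (-n) * Real.cos (n * θ)) (f θ) := by
      have h2' := (Equiv.neg ℤ).hasSum_iff.mpr h1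
      have he : (fun n : ℤ => a (-n) * Real.cos (n * θ)) =
          (fun n : ℤ => a n * Real.cos (n * θ)) ∘ (Equiv.neg ℤ) := by
        funext n
        show _ = a (-n) * Real.cos (((-n : ℤ) : ℝ) * θ)
        push_cast
        rw [neg_mul, Real.cos_neg]
      rw [he]
      exact h2'
    have h3 : (fun n : ℤ => (a n + a (-n)) / 2 * Real.cos (n * θ)) =
        fun n => (a n * Real.cos (n * θ) + a (-n) * Real.cos (n * θ)) / 2 := by
      funext n; ring
    rw [h3]
    simpa [add_self_div_two] using (h1.add h2).div_const 2

/-- A represented function has summable coefficients summing to `f 0`. -/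
theorem coeff_summable_and_tsum {f : ℝ → ℝ} {a : ℤ → ℝ} (hf : IsRep f a) :
    Summable (coeff f) ∧ (∑' n : ℤ, coeff f n) = f 0 := by
  have hneg : Summable fun n : ℤ => a (-n) := (Equiv.neg ℤ).summable_iff.mpr hf.1
  have hc : coeff f = fun n => (a n + a (-n)) / 2 := funext fun n => coeff_of_rep hf n
  constructor
  · rw [hc]; exact (hf.1.add hneg).div_const 2
  · rw [hc]
    have h1 : (∑' n : ℤ, (a n + a (-n)) / 2) = ((∑' n : ℤ, a n) + ∑' n : ℤ, a (-n)) / 2 := by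
      rw [tsum_div_const, Summable.tsum_add hf.1 hneg]
    have h2 : (∑' n : ℤ, a (-n)) = ∑' n : ℤ, a n := (Equiv.neg ℤ).tsum_eq a
    have h3 : (∑' n : ℤ, a n) = f 0 := (hasSum_at_zero hf).tsum_eq
    rw [h1, h2, h3, add_self_div_two]

theorem coeff_nonneg_of_rep {f : ℝ → ℝ} {a : ℤ → ℝ} (hf : IsRep f a)
    (ha : ∀ n, 0 ≤ a n) (n : ℤ) : 0 ≤ coeff f n := by
  rw [coeff_of_rep hf n]
  have := ha n; have := ha (-n); linarith

theorem isRep_coeff {f : ℝ → ℝ} {a : ℤ → ℝ} (hf : IsRep f a) : IsRep f (coeff f) := by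
  have hc : coeff f = fun n => (a n + a (-n)) / 2 := funext fun n => coeff_of_rep hf n
  rw [hc]; exact isRep_symm hf

theorem isRep_smul {f : ℝ → ℝ} {a : ℤ → ℝ} (c : ℝ) (hf : IsRep f a) :
    IsRep (fun θ => c * f θ) (fun n => c * a n) := by
  refine ⟨hf.1.mul_left c, fun θ => ?_⟩
  exact ((hf.2 θ).mul_left c).congrFun fun n => by ring

def convMul (a b : ℤ → ℝ) (n : ℤ) : ℝ :=
  (∑' m : ℤ, a m * b (n - m)) / 2 + (∑' m : ℤ, a m * b (m - n)) / 2

theorem convMul_nonneg {a b : ℤ → ℝ} (ha : ∀ n, 0 ≤ a n) (hb : ∀ n, 0 ≤ b n) (n : ℤ) :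
    0 ≤ convMul a b n := by
  have h1 : 0 ≤ ∑' m : ℤ, a m * b (n - m) := tsum_nonneg fun m => mul_nonneg (ha m) (hb _)
  have h2 : 0 ≤ ∑' m : ℤ, a m * b (m - n) := tsum_nonneg fun m => mul_nonneg (ha m) (hb _)
  unfold convMul; linarith

theorem norm_mul_cos_le {c : ℝ} (hc : 0 ≤ c) (x : ℝ) : ‖c * Real.cos x‖ ≤ c := by
  rw [norm_mul, Real.norm_eq_abs c, abs_of_nonneg hc, Real.norm_eq_abs]
  calc c * |Real.cos x| ≤ c * 1 := by gcongr; exact Real.abs_cos_le_one x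
    _ = c := mul_one c

set_option maxHeartbeats 2000000 in
theorem isRep_mul {f g : ℝ → ℝ} {a b : ℤ → ℝ} (hf : IsRep f a) (hg : IsRep g b)
    (ha : ∀ n, 0 ≤ a n) (hb : ∀ n, 0 ≤ b n) :
    IsRep (fun θ => f θ * g θ) (convMul a b) := by
  have hU : Summable fun p : ℤ × ℤ => a p.1 * b p.2 := hf.1.mul_of_nonneg hg.1 ha hb
  have hab : ∀ p : ℤ × ℤ, 0 ≤ a p.1 * b p.2 := fun p => mul_nonneg (ha _) (hb _)
  have hkey : ∀ θ : ℝ, HasSum (fun n : ℤ => convMul a b n * Real.cos (n * θ)) (f θ * g θ) := by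
    intro θ
    set v1 : ℤ × ℤ → ℝ := fun p => a p.1 * b p.2 * Real.cos (((p.1 + p.2 : ℤ) : ℝ) * θ)
      with hv1def
    set v2 : ℤ × ℤ → ℝ := fun p => a p.1 * b p.2 * Real.cos (((p.1 - p.2 : ℤ) : ℝ) * θ)
      with hv2def
    have hv1 : Summable v1 :=
      Summable.of_norm_bounded hU fun p => norm_mul_cos_le (hab p) _
    have hv2 : Summable v2 :=
      Summable.of_norm_bounded hU fun p => norm_mul_cos_le (hab p) _
    have hps : Summable fun p : ℤ × ℤ =>
        (a p.1 * Real.cos (p.1 * θ)) * (b p.2 * Real.cos (p.2 * θ)) := by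
      refine Summable.of_norm_bounded hU fun p => ?_
      have e : (a p.1 * Real.cos (p.1 * θ)) * (b p.2 * Real.cos (p.2 * θ)) =
          (a p.1 * b p.2 * Real.cos (p.1 * θ)) * Real.cos (p.2 * θ) := by ring
      rw [e]
      calc ‖(a p.1 * b p.2 * Real.cos (p.1 * θ)) * Real.cos ((p.2 : ℝ) * θ)‖
          ≤ ‖a p.1 * b p.2 * Real.cos ((p.1 : ℝ) * θ)‖ * 1 := by
            rw [norm_mul]
            gcongr
            simpa [Real.norm_eq_abs] using Real.abs_cos_le_one ((p.2 : ℝ) * θ)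
        _ ≤ a p.1 * b p.2 := by rw [mul_one]; exact norm_mul_cos_le (hab p) _
    have hprod : HasSum (fun p : ℤ × ℤ =>
        (a p.1 * Real.cos (p.1 * θ)) * (b p.2 * Real.cos (p.2 * θ))) (f θ * g θ) :=
      (hf.2 θ).mul (hg.2 θ) hps
    have hsplit : ∀ p : ℤ × ℤ, (v1 p + v2 p) / 2 =
        (a p.1 * Real.cos (p.1 * θ)) * (b p.2 * Real.cos (p.2 * θ)) := by
      intro p
      have h := cos_mul_cos' ((p.1 : ℝ) * θ) ((p.2 : ℝ) * θ)
      have e1 : ((p.1 : ℝ) * θ + (p.2 : ℝ) * θ) = ((p.1 + p.2 : ℤ) : ℝ) * θ := by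
        push_cast; ring
      have e2 : ((p.1 : ℝ) * θ - (p.2 : ℝ) * θ) = ((p.1 - p.2 : ℤ) : ℝ) * θ := by
        push_cast; ring
      rw [e1, e2] at h
      rw [hv1def, hv2def]
      calc (a p.1 * b p.2 * Real.cos (((p.1 + p.2 : ℤ) : ℝ) * θ) +
            a p.1 * b p.2 * Real.cos (((p.1 - p.2 : ℤ) : ℝ) * θ)) / 2
          = a p.1 * b p.2 * ((Real.cos (((p.1 + p.2 : ℤ) : ℝ) * θ) +
              Real.cos (((p.1 - p.2 : ℤ) : ℝ) * θ)) / 2) := by ring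
        _ = a p.1 * b p.2 * (Real.cos ((p.1 : ℝ) * θ) * Real.cos ((p.2 : ℝ) * θ)) := by
            rw [← h]
        _ = (a p.1 * Real.cos (p.1 * θ)) * (b p.2 * Real.cos (p.2 * θ)) := by ring
    have hT1 : HasSum v1 (∑' p, v1 p) := hv1.hasSum
    have hT2 : HasSum v2 (∑' p, v2 p) := hv2.hasSum
    have hTsum : ((∑' p, v1 p) + ∑' p, v2 p) / 2 = f θ * g θ :=
      (((hT1.add hT2).div_const 2)).unique (hprod.congrFun fun p => (hsplit p).symm)
    -- reindex v1 : (m, k) ↦ (m + k, m)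
    let E1 : ℤ × ℤ ≃ ℤ × ℤ :=
      ⟨fun p => (p.1 + p.2, p.1), fun q => (q.2, q.1 - q.2),
        fun p => by simp, fun q => by simp⟩
    have hw1 : HasSum (fun q : ℤ × ℤ => a q.2 * b (q.1 - q.2) * Real.cos ((q.1 : ℝ) * θ))
        (∑' p, v1 p) := by
      have hcomp : (fun q : ℤ × ℤ => a q.2 * b (q.1 - q.2) * Real.cos ((q.1 : ℝ) * θ)) ∘ E1
          = v1 := by
        funext p
        show a p.1 * b (p.1 + p.2 - p.1) * Real.cos (((p.1 + p.2 : ℤ) : ℝ) * θ) = v1 p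
        rw [add_sub_cancel_left, hv1def]
      exact E1.hasSum_iff.mp (hcomp ▸ hT1)
    have hfib1 : ∀ n : ℤ, HasSum (fun m : ℤ => a m * b (n - m) * Real.cos ((n : ℝ) * θ))
        ((∑' m : ℤ, a m * b (n - m)) * Real.cos ((n : ℝ) * θ)) := by
      intro n
      have hinj : Function.Injective (fun m : ℤ => (m, n - m)) := by
        intro x y hxy; exact (Prod.ext_iff.mp hxy).1
      have hsm : Summable fun m : ℤ => a m * b (n - m) := hU.comp_injective hinj
      exact hsm.hasSum.mul_right _
    have hS1 : HasSum (fun n : ℤ => (∑' m : ℤ, a m * b (n - m)) * Real.cos ((n : ℝ) * θ))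
        (∑' p, v1 p) := hw1.prod_fiberwise hfib1
    -- reindex v2 : (m, k) ↦ (m - k, m)
    let E2 : ℤ × ℤ ≃ ℤ × ℤ :=
      ⟨fun p => (p.1 - p.2, p.1), fun q => (q.2, q.2 - q.1),
        fun p => by simp, fun q => by simp⟩
    have hw2 : HasSum (fun q : ℤ × ℤ => a q.2 * b (q.2 - q.1) * Real.cos ((q.1 : ℝ) * θ))
        (∑' p, v2 p) := by
      have hcomp : (fun q : ℤ × ℤ => a q.2 * b (q.2 - q.1) * Real.cos ((q.1 : ℝ) * θ)) ∘ E2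
          = v2 := by
        funext p
        show a p.1 * b (p.1 - (p.1 - p.2)) * Real.cos (((p.1 - p.2 : ℤ) : ℝ) * θ) = v2 p
        rw [sub_sub_cancel, hv2def]
      exact E2.hasSum_iff.mp (hcomp ▸ hT2)
    have hfib2 : ∀ n : ℤ, HasSum (fun m : ℤ => a m * b (m - n) * Real.cos ((n : ℝ) * θ))
        ((∑' m : ℤ, a m * b (m - n)) * Real.cos ((n : ℝ) * θ)) := by
      intro n
      have hinj : Function.Injective (fun m : ℤ => (m, m - n)) := by
        intro x y hxy; exact (Prod.ext_iff.mp hxy).1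
      have hsm : Summable fun m : ℤ => a m * b (m - n) := hU.comp_injective hinj
      exact hsm.hasSum.mul_right _
    have hS2 : HasSum (fun n : ℤ => (∑' m : ℤ, a m * b (m - n)) * Real.cos ((n : ℝ) * θ))
        (∑' p, v2 p) := hw2.prod_fiberwise hfib2
    have hfinal : HasSum (fun n : ℤ => convMul a b n * Real.cos ((n : ℝ) * θ))
        (((∑' p, v1 p) + ∑' p, v2 p) / 2) :=
      ((hS1.add hS2).div_const 2).congrFun (fun n => by simp only [convMul]; ring)
    rwa [hTsum] at hfinal
  refine ⟨?_, hkey⟩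
  have := (hkey 0).summable
  exact this.congr fun n => by simp

def delta : ℤ → ℝ := fun n => if n = 0 then 1 else 0

theorem isRep_const (c : ℝ) : IsRep (fun _ => c) (fun n => if n = 0 then c else 0) := by
  constructor
  · exact (hasSum_ite_eq 0 c).summable
  · intro θ
    have h : (fun n : ℤ => (if n = 0 then c else 0) * Real.cos (n * θ)) =
        fun n : ℤ => if n = 0 then c else 0 := by
      funext n
      rcases eq_or_ne n 0 with h | h
      · subst h; simp
      · simp [h]
    rw [h]
    exact hasSum_ite_eq 0 c

def convPow (a : ℤ → ℝ) : ℕ → ℤ → ℝ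
  | 0 => delta
  | k + 1 => convMul a (convPow a k)

theorem isRep_pow {f : ℝ → ℝ} {a : ℤ → ℝ} (hf : IsRep f a) (ha : ∀ n, 0 ≤ a n) :
    ∀ k : ℕ, IsRep (fun θ => f θ ^ k) (convPow a k) ∧ ∀ n, 0 ≤ convPow a k n := by
  intro k
  induction k with
  | zero =>
      constructor
      · refine isRep_congr (fun θ => ?_) (isRep_const 1)
        rw [pow_zero]
      · intro n
        rw [convPow, delta]
        split_ifs <;> norm_num
  | succ k ih =>
      constructor
      · refine isRep_congr (fun θ => ?_) (isRep_mul hf ih.1 ha ih.2)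
        rw [pow_succ]
        ring
      · exact convMul_nonneg ha ih.2

def expC (a : ℤ → ℝ) (n : ℤ) : ℝ := ∑' k : ℕ, convPow a k n / (k ! : ℝ)

theorem hasSum_exp_series (x : ℝ) : HasSum (fun k : ℕ => x ^ k / (k ! : ℝ)) (Real.exp x) := by
  have hs := Real.summable_pow_div_factorial x
  have ht : (∑' k : ℕ, x ^ k / (k ! : ℝ)) = Real.exp x := by
    rw [Real.exp_eq_exp_ℝ, NormedSpace.exp_eq_tsum_div]
  exact ht ▸ hs.hasSum

set_option maxHeartbeats 1000000 in
theorem isRep_exp {f : ℝ → ℝ} {a : ℤ → ℝ} (hf : IsRep f a) (ha : ∀ n, 0 ≤ a n) :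
    IsRep (fun θ => Real.exp (f θ)) (expC a) ∧ (∀ n, 0 ≤ expC a n) ∧
      ∀ n : ℤ, Summable fun k : ℕ => convPow a k n / (k ! : ℝ) := by
  have hrep : ∀ k : ℕ, IsRep (fun θ => f θ ^ k) (convPow a k) := fun k => (isRep_pow hf ha k).1
  have hpos : ∀ (k : ℕ) (n : ℤ), 0 ≤ convPow a k n := fun k => (isRep_pow hf ha k).2
  have hM : ∀ k : ℕ, HasSum (convPow a k) (f 0 ^ k) := fun k => hasSum_at_zero (hrep k)
  have hVpos : (0 : ℕ × ℤ → ℝ) ≤ fun p => convPow a p.1 p.2 / (p.1 ! : ℝ) :=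
    fun p => div_nonneg (hpos p.1 p.2) (Nat.cast_nonneg _)
  have hVsum : Summable (fun p : ℕ × ℤ => convPow a p.1 p.2 / (p.1 ! : ℝ)) := by
    rw [summable_prod_of_nonneg hVpos]
    constructor
    · intro k
      dsimp only
      exact (hM k).summable.div_const _
    · dsimp only
      have hval : (fun k : ℕ => ∑' n : ℤ, convPow a k n / (k ! : ℝ)) =
          fun k : ℕ => f 0 ^ k / (k ! : ℝ) := by
        funext k
        rw [tsum_div_const, (hM k).tsum_eq]
      rw [hval]
      exact Real.summable_pow_div_factorial (f 0)
  have hfib : ∀ n : ℤ, Summable fun k : ℕ => convPow a k n / (k ! : ℝ) := by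
    intro n
    have h := ((Equiv.prodComm ℤ ℕ).summable_iff.mpr hVsum).prod_factor n
    exact h
  have hkey : ∀ θ : ℝ, HasSum (fun n : ℤ => expC a n * Real.cos (n * θ))
      (Real.exp (f θ)) := by
    intro θ
    have hWsum : Summable (fun p : ℕ × ℤ =>
        convPow a p.1 p.2 * Real.cos ((p.2 : ℝ) * θ) / (p.1 ! : ℝ)) := by
      refine Summable.of_norm_bounded hVsum fun p => ?_
      have e : convPow a p.1 p.2 * Real.cos ((p.2 : ℝ) * θ) / (p.1 ! : ℝ) =
          (convPow a p.1 p.2 / (p.1 ! : ℝ)) * Real.cos ((p.2 : ℝ) * θ) := by ring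
      rw [e]
      exact norm_mul_cos_le (hVpos p) _
    have hWhas := hWsum.hasSum
    have hfibk : ∀ k : ℕ, HasSum
        (fun n : ℤ => convPow a k n * Real.cos ((n : ℝ) * θ) / (k ! : ℝ))
        (f θ ^ k / (k ! : ℝ)) := fun k => ((hrep k).2 θ).div_const ((k ! : ℝ))
    have hsum1 : HasSum (fun k : ℕ => f θ ^ k / (k ! : ℝ))
        (∑' p : ℕ × ℤ, convPow a p.1 p.2 * Real.cos ((p.2 : ℝ) * θ) / (p.1 ! : ℝ)) := by
      refine hWhas.prod_fiberwise fun k => ?_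
      dsimp only
      exact hfibk k
    have hT : (∑' p : ℕ × ℤ, convPow a p.1 p.2 * Real.cos ((p.2 : ℝ) * θ) / (p.1 ! : ℝ))
        = Real.exp (f θ) := hsum1.unique (hasSum_exp_series (f θ))
    have hWswap : HasSum (fun q : ℤ × ℕ =>
        convPow a q.2 q.1 * Real.cos ((q.1 : ℝ) * θ) / (q.2 ! : ℝ))
        (∑' p : ℕ × ℤ, convPow a p.1 p.2 * Real.cos ((p.2 : ℝ) * θ) / (p.1 ! : ℝ)) := by
      have h := (Equiv.prodComm ℤ ℕ).hasSum_iff.mpr hWhas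
      exact h
    have hfibn : ∀ n : ℤ, HasSum
        (fun k : ℕ => convPow a k n * Real.cos ((n : ℝ) * θ) / (k ! : ℝ))
        (expC a n * Real.cos ((n : ℝ) * θ)) := by
      intro n
      have h1 : HasSum (fun k : ℕ => (convPow a k n / (k ! : ℝ)) * Real.cos ((n : ℝ) * θ))
          ((∑' k : ℕ, convPow a k n / (k ! : ℝ)) * Real.cos ((n : ℝ) * θ)) :=
        (hfib n).hasSum.mul_right _
      exact h1.congrFun fun k => by ring
    have hfin : HasSum (fun n : ℤ => expC a n * Real.cos ((n : ℝ) * θ))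
        (∑' p : ℕ × ℤ, convPow a p.1 p.2 * Real.cos ((p.2 : ℝ) * θ) / (p.1 ! : ℝ)) := by
      refine hWswap.prod_fiberwise fun n => ?_
      dsimp only
      exact hfibn n
    rwa [hT] at hfin
  refine ⟨⟨?_, hkey⟩, fun n => tsum_nonneg fun k => div_nonneg (hpos k n) (Nat.cast_nonneg _),
    hfib⟩
  exact ((hkey 0).summable).congr fun n => by simp

/-! ### The classical discrete heat kernel `e^{-4u sin²(θ/2)}` -/

/-- coefficients of `2u cos θ`. -/
def ccoef (u : ℝ) : ℤ → ℝ := fun n => (if n = 1 then u else 0) + (if n = -1 then u else 0)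

theorem isRep_two_mul_cos (u : ℝ) :
    IsRep (fun θ => 2 * u * Real.cos θ) (ccoef u) := by
  have hone : ∀ θ : ℝ, HasSum (fun n : ℤ => (if n = 1 then u else 0) * Real.cos (n * θ))
      (u * Real.cos θ) := by
    intro θ
    have h : (fun n : ℤ => (if n = 1 then u else 0) * Real.cos (n * θ)) =
        fun n : ℤ => if n = 1 then u * Real.cos θ else 0 := by
      funext n
      rcases eq_or_ne n 1 with h | h
      · subst h; norm_num
      · simp [h]
    rw [h]
    exact hasSum_ite_eq 1 _
  have hmone : ∀ θ : ℝ, HasSum (fun n : ℤ => (if n = -1 then u else 0) * Real.cos (n * θ))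
      (u * Real.cos θ) := by
    intro θ
    have h : (fun n : ℤ => (if n = -1 then u else 0) * Real.cos (n * θ)) =
        fun n : ℤ => if n = -1 then u * Real.cos θ else 0 := by
      funext n
      rcases eq_or_ne n (-1) with h | h
      · subst h
        have : ((-1 : ℤ) : ℝ) * θ = -θ := by push_cast; ring
        simp [this, Real.cos_neg]
      · simp [h]
    rw [h]
    exact hasSum_ite_eq (-1) _
  constructor
  · exact (((hasSum_ite_eq (1 : ℤ) u)).add ((hasSum_ite_eq (-1 : ℤ) u))).summable
  · intro θ
    have h := (hone θ).add (hmone θ)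
    have h2 : (fun θ' : ℝ => 2 * u * Real.cos θ') θ = u * Real.cos θ + u * Real.cos θ := by
      simp only; ring
    rw [h2]
    exact h.congrFun fun n => by rw [ccoef]; ring

theorem isRep_sub {f g : ℝ → ℝ} {a b : ℤ → ℝ} (hf : IsRep f a) (hg : IsRep g b) :
    IsRep (fun θ => f θ - g θ) (fun n => a n - b n) :=
  ⟨hf.1.sub hg.1, fun θ => (((hf.2 θ).sub (hg.2 θ)).congrFun fun n => by ring)⟩

def pcoef (u : ℝ) : ℤ → ℝ := fun n => Real.exp (-(2 * u)) * expC (ccoef u) n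

theorem ccoef_nonneg {u : ℝ} (hu : 0 ≤ u) (n : ℤ) : 0 ≤ ccoef u n := by
  rw [ccoef]
  refine add_nonneg ?_ ?_ <;> (split_ifs <;> simp [hu])

theorem heat_eq (u θ : ℝ) :
    Real.exp (-(2 * u)) * Real.exp (2 * u * Real.cos θ) =
      Real.exp (-(4 * Real.sin (θ / 2) ^ 2) * u) := by
  rw [← Real.exp_add]
  congr 1
  have hs : Real.sin (θ / 2) ^ 2 = 1 / 2 - Real.cos θ / 2 := by
    have h := Real.sin_sq_eq_half_sub (θ / 2)
    rwa [show 2 * (θ / 2) = θ by ring] at h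
  rw [hs]; ring

theorem isRep_p {u : ℝ} (hu : 0 ≤ u) :
    IsRep (fun θ => Real.exp (-(4 * Real.sin (θ / 2) ^ 2) * u)) (pcoef u) ∧
      (∀ n, 0 ≤ pcoef u n) ∧ Real.exp (-(2 * u)) ≤ pcoef u 0 := by
  obtain ⟨hrep, hpos, hsumk⟩ := isRep_exp (isRep_two_mul_cos u) (ccoef_nonneg hu)
  have hsm := isRep_smul (Real.exp (-(2 * u))) hrep
  refine ⟨isRep_congr (fun θ => heat_eq u θ) hsm,
    fun n => mul_nonneg (Real.exp_nonneg _) (hpos n), ?_⟩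
  have h1 : (1 : ℝ) ≤ expC (ccoef u) 0 := by
    have hle := Summable.le_tsum (hsumk 0) 0 (fun k _ =>
      div_nonneg ((isRep_pow (isRep_two_mul_cos u) (ccoef_nonneg hu) k).2 0) (Nat.cast_nonneg _))
    simpa [convPow, delta, expC] using hle
  calc Real.exp (-(2 * u)) = Real.exp (-(2 * u)) * 1 := by ring
    _ ≤ Real.exp (-(2 * u)) * expC (ccoef u) 0 :=
        mul_le_mul_of_nonneg_left h1 (Real.exp_nonneg _)
    _ = pcoef u 0 := rfl

def qfun (u θ : ℝ) : ℝ :=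
  Real.exp (-(4 * Real.sin (θ / 2) ^ 2) * u) - Real.exp (-(4 * u))

def qcoef (u : ℝ) : ℤ → ℝ :=
  fun n => pcoef u n - (if n = 0 then Real.exp (-(4 * u)) else 0)

theorem isRep_q {u : ℝ} (hu : 0 ≤ u) : IsRep (qfun u) (qcoef u) ∧ ∀ n, 0 ≤ qcoef u n := by
  obtain ⟨hp, hppos, hp0⟩ := isRep_p hu
  constructor
  · exact isRep_sub hp (isRep_const (Real.exp (-(4 * u))))
  · intro n
    rw [qcoef]
    rcases eq_or_ne n 0 with h | h
    · subst h
      simp only [if_pos rfl, sub_nonneg]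
      refine le_trans ?_ hp0
      exact Real.exp_le_exp.mpr (by linarith)
    · simp only [if_neg h, sub_zero]
      exact hppos n

def Acoef (u : ℝ) (n : ℤ) : ℝ := coeff (qfun u) n

theorem Acoef_rep {u : ℝ} (hu : 0 ≤ u) : IsRep (qfun u) (Acoef u) :=
  isRep_coeff (isRep_q hu).1

theorem Acoef_nonneg {u : ℝ} (hu : 0 ≤ u) (n : ℤ) : 0 ≤ Acoef u n :=
  coeff_nonneg_of_rep (isRep_q hu).1 (isRep_q hu).2 n

theorem Acoef_mass {u : ℝ} (hu : 0 ≤ u) : HasSum (Acoef u) (1 - Real.exp (-(4 * u))) := by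
  have h := hasSum_at_zero (Acoef_rep hu)
  have hq : qfun u 0 = 1 - Real.exp (-(4 * u)) := by
    simp [qfun]
  rwa [hq] at h

theorem Acoef_continuous (n : ℤ) : Continuous fun u => Acoef u n := by
  have hc : Continuous (Function.uncurry fun u θ : ℝ => qfun u θ * Real.cos ((n : ℝ) * θ)) := by
    simp only [qfun, Function.uncurry]
    fun_prop
  have hI : Continuous fun u : ℝ => ∫ θ in (-Real.pi)..Real.pi,
      qfun u θ * Real.cos ((n : ℝ) * θ) :=
    intervalIntegral.continuous_parametric_intervalIntegral_of_continuous' (μ := volume) hc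
      (-Real.pi) Real.pi
  exact continuous_const.mul hI

/-! ### The Lévy measure `u^{-1-s} du` and the subordination identity -/

def Kc (s : ℝ) : ℝ := ∫ u in Ioi (0 : ℝ), (1 - Real.exp (-u)) * u ^ (-1 - s)

theorem one_sub_exp_le {y : ℝ} : 1 - Real.exp (-y) ≤ y := by
  have h := Real.add_one_le_exp (-y)
  linarith

theorem one_sub_exp_nonneg {y : ℝ} (hy : 0 ≤ y) : 0 ≤ 1 - Real.exp (-y) := by
  have h : Real.exp (-y) ≤ 1 := by
    rw [Real.exp_le_one_iff]
    linarith
  linarith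

theorem integrableOn_levy {s : ℝ} (hs0 : 0 < s) (hs1 : s < 1) {x : ℝ} (hx0 : 0 ≤ x)
    (hx4 : x ≤ 4) :
    IntegrableOn (fun u => (1 - Real.exp (-(x * u))) * u ^ (-1 - s)) (Ioi (0 : ℝ)) := by
  have hm : Measurable fun u : ℝ => (1 - Real.exp (-(x * u))) * u ^ (-1 - s) := by fun_prop
  have h1 : IntegrableOn (fun u => (1 - Real.exp (-(x * u))) * u ^ (-1 - s)) (Ioc (0:ℝ) 1) := by
    have hg : IntegrableOn (fun u : ℝ => 4 * u ^ (-s)) (Ioc (0:ℝ) 1) := by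
      have h := intervalIntegral.intervalIntegrable_rpow' (a := (0:ℝ)) (b := 1) (r := -s)
        (by linarith)
      have h' := (intervalIntegrable_iff_integrableOn_Ioc_of_le (by norm_num : (0:ℝ) ≤ 1)).mp h
      exact h'.const_mul 4
    refine Integrable.mono' hg hm.aestronglyMeasurable ?_
    refine (ae_restrict_iff' measurableSet_Ioc).mpr (ae_of_all _ fun u hu => ?_)
    have hu0 : 0 < u := hu.1
    have hxu : 0 ≤ x * u := mul_nonneg hx0 hu0.le
    have hnn : 0 ≤ (1 - Real.exp (-(x * u))) * u ^ (-1 - s) :=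
      mul_nonneg (one_sub_exp_nonneg hxu) (Real.rpow_nonneg hu0.le _)
    rw [Real.norm_eq_abs, abs_of_nonneg hnn]
    have hb : 1 - Real.exp (-(x * u)) ≤ 4 * u := by
      have := one_sub_exp_le (y := x * u)
      nlinarith
    have hpow : u * u ^ (-1 - s) = u ^ (-s) := by
      have h2 := Real.rpow_add hu0 1 (-1 - s)
      rw [Real.rpow_one] at h2
      rw [← h2]
      congr 1
      ring
    calc (1 - Real.exp (-(x * u))) * u ^ (-1 - s) ≤ (4 * u) * u ^ (-1 - s) :=
          mul_le_mul_of_nonneg_right hb (Real.rpow_nonneg hu0.le _)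
      _ = 4 * u ^ (-s) := by rw [mul_assoc, hpow]
  have h2 : IntegrableOn (fun u => (1 - Real.exp (-(x * u))) * u ^ (-1 - s)) (Ioi (1:ℝ)) := by
    have hg : IntegrableOn (fun u : ℝ => u ^ (-1 - s)) (Ioi (1:ℝ)) :=
      integrableOn_Ioi_rpow_of_lt (by linarith) zero_lt_one
    refine Integrable.mono' hg hm.aestronglyMeasurable ?_
    refine (ae_restrict_iff' measurableSet_Ioi).mpr (ae_of_all _ fun u hu => ?_)
    have hu0 : (0:ℝ) < u := lt_trans zero_lt_one hu
    have hxu : 0 ≤ x * u := mul_nonneg hx0 hu0.le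
    have hnn : 0 ≤ (1 - Real.exp (-(x * u))) * u ^ (-1 - s) :=
      mul_nonneg (one_sub_exp_nonneg hxu) (Real.rpow_nonneg hu0.le _)
    rw [Real.norm_eq_abs, abs_of_nonneg hnn]
    have h1e : 1 - Real.exp (-(x * u)) ≤ 1 := by linarith [Real.exp_nonneg (-(x * u))]
    calc (1 - Real.exp (-(x * u))) * u ^ (-1 - s) ≤ 1 * u ^ (-1 - s) :=
          mul_le_mul_of_nonneg_right h1e (Real.rpow_nonneg hu0.le _)
      _ = u ^ (-1 - s) := one_mul _
  have hun : Ioc (0:ℝ) 1 ∪ Ioi (1:ℝ) = Ioi (0:ℝ) := Ioc_union_Ioi_eq_Ioi zero_le_one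
  rw [← hun]
  exact h1.union h2

theorem levy_eval {s : ℝ} (hs0 : 0 < s) (hs1 : s < 1) {x : ℝ} (hx0 : 0 ≤ x) :
    (∫ u in Ioi (0 : ℝ), (1 - Real.exp (-(x * u))) * u ^ (-1 - s)) = x ^ s * Kc s := by
  rcases eq_or_lt_of_le hx0 with h | hx
  · rw [← h]
    simp [Real.zero_rpow hs0.ne']
  · have key := integral_comp_mul_left_Ioi
      (fun v => (1 - Real.exp (-v)) * v ^ (-1 - s)) 0 hx
    rw [mul_zero] at key
    have hx1s : x ^ (1 + s) * x ^ (-1 - s) = 1 := by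
      rw [← Real.rpow_add hx]
      norm_num
    have hcong : (∫ u in Ioi (0:ℝ), (1 - Real.exp (-(x * u))) * u ^ (-1 - s)) =
        ∫ u in Ioi (0:ℝ), x ^ (1 + s) *
          ((1 - Real.exp (-(x * u))) * (x * u) ^ (-1 - s)) := by
      refine setIntegral_congr_fun measurableSet_Ioi fun u hu => ?_
      have hu0 : (0:ℝ) < u := hu
      rw [Real.mul_rpow hx.le hu0.le]
      calc (1 - Real.exp (-(x * u))) * u ^ (-1 - s)
          = (x ^ (1 + s) * x ^ (-1 - s)) * ((1 - Real.exp (-(x * u))) * u ^ (-1 - s)) := by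
            rw [hx1s, one_mul]
        _ = x ^ (1 + s) * ((1 - Real.exp (-(x * u))) * (x ^ (-1 - s) * u ^ (-1 - s))) := by
            ring
    rw [hcong, integral_const_mul, key, smul_eq_mul]
    rw [Real.rpow_add hx, Real.rpow_one]
    rw [show (∫ v in Ioi (0:ℝ), (1 - Real.exp (-v)) * v ^ (-1 - s)) = Kc s from rfl]
    field_simp

theorem Kc_pos {s : ℝ} (hs0 : 0 < s) (hs1 : s < 1) : 0 < Kc s := by
  have hInt : IntegrableOn (fun u : ℝ => (1 - Real.exp (-u)) * u ^ (-1 - s)) (Ioi 0) := by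
    have h := integrableOn_levy hs0 hs1 (x := 1) zero_le_one (by norm_num)
    refine h.congr_fun (fun u _ => by simp only [one_mul]) measurableSet_Ioi
  have hnn : 0 ≤ᵐ[volume.restrict (Ioi (0:ℝ))]
      fun u : ℝ => (1 - Real.exp (-u)) * u ^ (-1 - s) := by
    refine (ae_restrict_iff' measurableSet_Ioi).mpr (ae_of_all _ fun u hu => ?_)
    exact mul_nonneg (one_sub_exp_nonneg (le_of_lt hu)) (Real.rpow_nonneg (le_of_lt hu) _)
  rw [Kc, setIntegral_pos_iff_support_of_nonneg_ae hnn hInt]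
  have hsub : Ioi (0:ℝ) ⊆
      Function.support (fun u : ℝ => (1 - Real.exp (-u)) * u ^ (-1 - s)) ∩ Ioi 0 := by
    intro u hu
    refine ⟨?_, hu⟩
    have hu0 : (0:ℝ) < u := hu
    have h1 : 0 < 1 - Real.exp (-u) := by
      have : Real.exp (-u) < 1 := by
        rw [Real.exp_lt_one_iff]
        linarith
      linarith
    have h2 : 0 < u ^ (-1 - s) := Real.rpow_pos_of_pos hu0 _
    exact ne_of_gt (mul_pos h1 h2)
  calc (0:ℝ≥0∞) < volume (Ioi (0:ℝ)) := by rw [Real.volume_Ioi]; exact ENNReal.zero_lt_top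
    _ ≤ volume (Function.support (fun u : ℝ => (1 - Real.exp (-u)) * u ^ (-1 - s)) ∩ Ioi 0) :=
        measure_mono hsub

theorem integrableOn_qfun {s : ℝ} (hs0 : 0 < s) (hs1 : s < 1) (θ : ℝ) :
    IntegrableOn (fun u => qfun u θ * u ^ (-1 - s)) (Ioi (0 : ℝ)) := by
  have hx0 : 0 ≤ 4 * Real.sin (θ / 2) ^ 2 := by positivity
  have hx4 : 4 * Real.sin (θ / 2) ^ 2 ≤ 4 := by nlinarith [Real.sin_sq_le_one (θ / 2)]
  have h4 := integrableOn_levy hs0 hs1 (x := 4) (by norm_num) (le_refl 4)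
  have hx := integrableOn_levy hs0 hs1 hx0 hx4
  have hsub : IntegrableOn (fun u => (1 - Real.exp (-(4 * u))) * u ^ (-1 - s) -
      (1 - Real.exp (-(4 * Real.sin (θ / 2) ^ 2 * u))) * u ^ (-1 - s)) (Ioi (0:ℝ)) :=
    h4.sub hx
  refine hsub.congr_fun (fun u _ => ?_) measurableSet_Ioi
  simp only [qfun, neg_mul]
  ring

theorem qfun_integral {s : ℝ} (hs0 : 0 < s) (hs1 : s < 1) (θ : ℝ) :
    (∫ u in Ioi (0 : ℝ), qfun u θ * u ^ (-1 - s)) =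
      ((4 : ℝ) ^ s - (4 * Real.sin (θ / 2) ^ 2) ^ s) * Kc s := by
  have hx0 : 0 ≤ 4 * Real.sin (θ / 2) ^ 2 := by positivity
  have hx4 : 4 * Real.sin (θ / 2) ^ 2 ≤ 4 := by nlinarith [Real.sin_sq_le_one (θ / 2)]
  have h4 := integrableOn_levy hs0 hs1 (x := 4) (by norm_num) (le_refl 4)
  have hx := integrableOn_levy hs0 hs1 hx0 hx4
  have hcong : (∫ u in Ioi (0 : ℝ), qfun u θ * u ^ (-1 - s)) =
      ∫ u in Ioi (0 : ℝ), ((1 - Real.exp (-(4 * u))) * u ^ (-1 - s) -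
        (1 - Real.exp (-(4 * Real.sin (θ / 2) ^ 2 * u))) * u ^ (-1 - s)) := by
    refine setIntegral_congr_fun measurableSet_Ioi fun u hu => ?_
    simp only [qfun, neg_mul]
    ring
  rw [hcong, integral_sub h4 hx, levy_eval hs0 hs1 (by norm_num : (0:ℝ) ≤ 4),
    levy_eval hs0 hs1 hx0]
  ring

def bcoef (s : ℝ) (n : ℤ) : ℝ := (Kc s)⁻¹ * ∫ u in Ioi (0 : ℝ), Acoef u n * u ^ (-1 - s)

set_option maxHeartbeats 1000000 in
theorem isRep_b {s : ℝ} (hs0 : 0 < s) (hs1 : s < 1) :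
    IsRep (fun θ => (4 : ℝ) ^ s - (4 * Real.sin (θ / 2) ^ 2) ^ s) (bcoef s) ∧
      ∀ n, 0 ≤ bcoef s n := by
  have hK := Kc_pos hs0 hs1
  -- measurability
  have hm : ∀ n : ℤ, Measurable fun u : ℝ => Acoef u n * u ^ (-1 - s) := by
    intro n
    exact (Acoef_continuous n).measurable.mul (by fun_prop)
  have haem : ∀ n : ℤ, AEStronglyMeasurable (fun u : ℝ => Acoef u n * u ^ (-1 - s))
      (volume.restrict (Ioi 0)) := fun n => (hm n).aestronglyMeasurable
  have hnn : ∀ n : ℤ, 0 ≤ᵐ[volume.restrict (Ioi (0:ℝ))]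
      fun u : ℝ => Acoef u n * u ^ (-1 - s) := by
    intro n
    refine (ae_restrict_iff' measurableSet_Ioi).mpr (ae_of_all _ fun u hu => ?_)
    exact mul_nonneg (Acoef_nonneg (le_of_lt hu) n) (Real.rpow_nonneg (le_of_lt hu) _)
  -- the ENNReal-valued integrals
  set G : ℤ → ℝ≥0∞ :=
    fun n => ∫⁻ u in Ioi (0:ℝ), ENNReal.ofReal (Acoef u n * u ^ (-1 - s)) with hGdef
  have hint4 : IntegrableOn (fun u : ℝ => (1 - Real.exp (-(4 * u))) * u ^ (-1 - s))
      (Ioi (0:ℝ)) := integrableOn_levy hs0 hs1 (by norm_num) (le_refl 4)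
  have hnn4 : 0 ≤ᵐ[volume.restrict (Ioi (0:ℝ))]
      fun u : ℝ => (1 - Real.exp (-(4 * u))) * u ^ (-1 - s) := by
    refine (ae_restrict_iff' measurableSet_Ioi).mpr (ae_of_all _ fun u hu => ?_)
    have hu0 : (0:ℝ) < u := hu
    exact mul_nonneg (one_sub_exp_nonneg (by linarith)) (Real.rpow_nonneg hu0.le _)
  have hGsum : (∑' n : ℤ, G n) = ENNReal.ofReal ((4:ℝ) ^ s * Kc s) := by
    rw [hGdef]
    rw [← lintegral_tsum (fun n => ((hm n).ennreal_ofReal).aemeasurable)]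
    have hae : ∀ᵐ u ∂(volume.restrict (Ioi (0:ℝ))),
        (∑' n : ℤ, ENNReal.ofReal (Acoef u n * u ^ (-1 - s))) =
          ENNReal.ofReal ((1 - Real.exp (-(4 * u))) * u ^ (-1 - s)) := by
      refine (ae_restrict_iff' measurableSet_Ioi).mpr (ae_of_all _ fun u hu => ?_)
      have hu0 : (0:ℝ) ≤ u := le_of_lt hu
      have hsumA : Summable fun n : ℤ => Acoef u n * u ^ (-1 - s) :=
        (Acoef_mass hu0).summable.mul_right _
      have h1 : ENNReal.ofReal (∑' n : ℤ, Acoef u n * u ^ (-1 - s)) =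
          ∑' n : ℤ, ENNReal.ofReal (Acoef u n * u ^ (-1 - s)) :=
        ENNReal.ofReal_tsum_of_nonneg
          (fun n => mul_nonneg (Acoef_nonneg hu0 n) (Real.rpow_nonneg hu0 _)) hsumA
      have h2 : (∑' n : ℤ, Acoef u n * u ^ (-1 - s)) =
          (1 - Real.exp (-(4 * u))) * u ^ (-1 - s) :=
        ((Acoef_mass hu0).mul_right _).tsum_eq
      rw [← h1, h2]
    rw [lintegral_congr_ae hae, ← ofReal_integral_eq_lintegral_ofReal hint4 hnn4,
      levy_eval hs0 hs1 (by norm_num : (0:ℝ) ≤ 4)]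
  have hGtop : (∑' n : ℤ, G n) ≠ ⊤ := by rw [hGsum]; exact ENNReal.ofReal_ne_top
  have hGn : ∀ n : ℤ, G n ≠ ⊤ := fun n => ne_top_of_le_ne_top hGtop (ENNReal.le_tsum n)
  have hIn : ∀ n : ℤ, IntegrableOn (fun u : ℝ => Acoef u n * u ^ (-1 - s)) (Ioi (0:ℝ)) := by
    intro n
    refine ⟨haem n, ?_⟩
    rw [hasFiniteIntegral_iff_ofReal (hnn n)]
    exact lt_top_iff_ne_top.mpr (hGn n)
  have hβeq : ∀ n : ℤ, (∫ u in Ioi (0:ℝ), Acoef u n * u ^ (-1 - s)) = (G n).toReal :=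
    fun n => integral_eq_lintegral_of_nonneg_ae (hnn n) (haem n)
  have hβnn : ∀ n : ℤ, 0 ≤ ∫ u in Ioi (0:ℝ), Acoef u n * u ^ (-1 - s) :=
    fun n => (hβeq n) ▸ ENNReal.toReal_nonneg
  have hβsum : Summable fun n : ℤ => ∫ u in Ioi (0:ℝ), Acoef u n * u ^ (-1 - s) := by
    have := ENNReal.summable_toReal hGtop
    exact this.congr fun n => (hβeq n).symm
  -- now the HasSum at every θ
  have hkey : ∀ θ : ℝ, HasSum (fun n : ℤ => bcoef s n * Real.cos (n * θ))
      ((4 : ℝ) ^ s - (4 * Real.sin (θ / 2) ^ 2) ^ s) := by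
    intro θ
    have hsummand : ∀ n : ℤ, bcoef s n * Real.cos (n * θ) =
        (Kc s)⁻¹ * ((∫ u in Ioi (0:ℝ), Acoef u n * u ^ (-1 - s)) * Real.cos (n * θ)) := by
      intro n; rw [bcoef]; ring
    have hs1' : Summable fun n : ℤ =>
        (∫ u in Ioi (0:ℝ), Acoef u n * u ^ (-1 - s)) * Real.cos ((n : ℝ) * θ) :=
      Summable.of_norm_bounded hβsum fun n => norm_mul_cos_le (hβnn n) _
    have hsummable : Summable fun n : ℤ => bcoef s n * Real.cos ((n : ℝ) * θ) :=
      (hs1'.mul_left ((Kc s)⁻¹)).congr fun n => (hsummand n).symm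
    -- compute the tsum via integral_tsum
    have haemc : ∀ n : ℤ, AEStronglyMeasurable
        (fun u : ℝ => Acoef u n * u ^ (-1 - s) * Real.cos ((n : ℝ) * θ))
        (volume.restrict (Ioi 0)) := fun n => (haem n).mul_const _
    have hlt : (∑' n : ℤ, ∫⁻ u in Ioi (0:ℝ),
        ‖Acoef u n * u ^ (-1 - s) * Real.cos ((n : ℝ) * θ)‖₊ ∂volume) ≠ ⊤ := by
      refine ne_top_of_le_ne_top hGtop (ENNReal.tsum_le_tsum fun n => ?_)
      rw [hGdef]
      refine lintegral_mono_ae ((ae_restrict_iff' measurableSet_Ioi).mpr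
        (ae_of_all _ fun u hu => ?_))
      have hu0 : (0:ℝ) ≤ u := le_of_lt hu
      have hAnn : 0 ≤ Acoef u n * u ^ (-1 - s) :=
        mul_nonneg (Acoef_nonneg hu0 n) (Real.rpow_nonneg hu0 _)
      have hb : ‖Acoef u n * u ^ (-1 - s) * Real.cos ((n : ℝ) * θ)‖
          ≤ Acoef u n * u ^ (-1 - s) := norm_mul_cos_le hAnn _
      calc (‖Acoef u n * u ^ (-1 - s) * Real.cos ((n : ℝ) * θ)‖₊ : ℝ≥0∞)
          = ENNReal.ofReal ‖Acoef u n * u ^ (-1 - s) * Real.cos ((n : ℝ) * θ)‖ := by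
            exact (ofReal_norm _).symm
        _ ≤ ENNReal.ofReal (Acoef u n * u ^ (-1 - s)) := ENNReal.ofReal_le_ofReal hb
    have htsum_int : (∑' n : ℤ, ∫ u in Ioi (0:ℝ),
        Acoef u n * u ^ (-1 - s) * Real.cos ((n : ℝ) * θ)) =
        ∫ u in Ioi (0:ℝ), qfun u θ * u ^ (-1 - s) := by
      rw [← MeasureTheory.integral_tsum haemc hlt]
      refine integral_congr_ae ((ae_restrict_iff' measurableSet_Ioi).mpr
        (ae_of_all _ fun u hu => ?_))
      have hu0 : (0:ℝ) ≤ u := le_of_lt hu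
      have hh : HasSum (fun n : ℤ => Acoef u n * u ^ (-1 - s) * Real.cos ((n : ℝ) * θ))
          (qfun u θ * u ^ (-1 - s)) := by
        have h1 := ((Acoef_rep hu0).2 θ).mul_right (u ^ (-1 - s))
        exact h1.congrFun fun n => by ring
      exact hh.tsum_eq
    have htsum : (∑' n : ℤ, bcoef s n * Real.cos ((n : ℝ) * θ)) =
        (4 : ℝ) ^ s - (4 * Real.sin (θ / 2) ^ 2) ^ s := by
      calc (∑' n : ℤ, bcoef s n * Real.cos ((n : ℝ) * θ))
          = ∑' n : ℤ, (Kc s)⁻¹ * ((∫ u in Ioi (0:ℝ), Acoef u n * u ^ (-1 - s)) *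
              Real.cos ((n : ℝ) * θ)) := tsum_congr hsummand
        _ = (Kc s)⁻¹ * ∑' n : ℤ, (∫ u in Ioi (0:ℝ), Acoef u n * u ^ (-1 - s)) *
              Real.cos ((n : ℝ) * θ) := tsum_mul_left
        _ = (Kc s)⁻¹ * ∑' n : ℤ, ∫ u in Ioi (0:ℝ),
              Acoef u n * u ^ (-1 - s) * Real.cos ((n : ℝ) * θ) := by
            congr 1
            refine tsum_congr fun n => ?_
            rw [← integral_mul_const]
        _ = (Kc s)⁻¹ * (((4 : ℝ) ^ s - (4 * Real.sin (θ / 2) ^ 2) ^ s) * Kc s) := by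
            rw [htsum_int, qfun_integral hs0 hs1]
        _ = (4 : ℝ) ^ s - (4 * Real.sin (θ / 2) ^ 2) ^ s := by
            field_simp
    exact (Summable.hasSum_iff hsummable).mpr htsum
  constructor
  · exact ⟨((hkey 0).summable).congr fun n => by simp, hkey⟩
  · intro n
    exact mul_nonneg (inv_nonneg.mpr hK.le) (hβnn n)

end LkerAux

end

/-- The family `L^s_n(t)`, `n ∈ ℤ`, is summable with total mass `1`. -/
theorem Lker_sum_one (s t : ℝ) (hs0 : 0 < s) (hs1 : s < 1) (ht : 0 ≤ t) :
    (Summable fun n : ℤ => Lker s n t) ∧ (∑' n : ℤ, Lker s n t) = 1 := by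
  classical
  obtain ⟨hbrep, hbnn⟩ := LkerAux.isRep_b hs0 hs1
  have h1 := LkerAux.isRep_smul t hbrep
  have h1nn : ∀ n : ℤ, 0 ≤ t * LkerAux.bcoef s n := fun n => mul_nonneg ht (hbnn n)
  obtain ⟨hexp, hexpnn, -⟩ := LkerAux.isRep_exp h1 h1nn
  have h2 := LkerAux.isRep_smul (Real.exp (-(t * 4 ^ s))) hexp
  have hFrep : LkerAux.IsRep (fun θ => Real.exp (-t * (4 * Real.sin (θ / 2) ^ 2) ^ s))
      (fun n => Real.exp (-(t * 4 ^ s)) *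
        LkerAux.expC (fun m => t * LkerAux.bcoef s m) n) := by
    refine LkerAux.isRep_congr (fun θ => ?_) h2
    rw [← Real.exp_add]
    congr 1
    ring
  have hsum := LkerAux.coeff_summable_and_tsum hFrep
  have hLk : ∀ n : ℤ, Lker s n t =
      LkerAux.coeff (fun θ => Real.exp (-t * (4 * Real.sin (θ / 2) ^ 2) ^ s)) n :=
    fun n => rfl
  have hF0 : Real.exp (-t * (4 * Real.sin ((0:ℝ) / 2) ^ 2) ^ s) = 1 := by
    rw [zero_div, Real.sin_zero]
    norm_num
    rw [Real.zero_rpow hs0.ne']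
    norm_num
  constructor
  · exact hsum.1.congr fun n => (hLk n).symm
  · rw [tsum_congr hLk, hsum.2, hF0]
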